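/- If a torsionless abelian group G binds some subgroup of infinite rank, then there is a homomorphic image G' of G with G' ⊆ P = ∏_{n∈ℕ} ℤ such that the group G' + S binds S, where S = ⊕_{n∈ℕ} ℤ. -/

import Mathlib

open Cardinal

def Torsionless (G : Type*) [AddCommGroup G] : Prop :=
  ∀ g : G, g ≠ 0 → ∃ f : G →+ ℤ, f g ≠ 0

/-- `G` binds a subgroup `H` if every homomorphism from `G` to a free abelian
group maps `H` into a subgroup of finite rank. -/
def Binds.{u} {G : Type*} [AddCommGroup G] (H : AddSubgroup G) : Prop :=
  ∀ (ι : Type u) (f : G →+ (ι →₀ ℤ)), Module.rank ℤ (H.map f) < ℵ₀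

/-- `S = ⊕_{n∈ℕ} ℤ`, the finitely supported sequences, as a subgroup of the
Baer–Specker group `P = ∏_{n∈ℕ} ℤ`. -/
def SpeckerS : AddSubgroup (ℕ → ℤ) where
  carrier := {x | (Function.support x).Finite}
  zero_mem' := by simp
  add_mem' {a b} ha hb := (ha.union hb).subset (Function.support_add a b)
  neg_mem' {a} ha := by simpa using ha

lemma clear_denoms {k : ℕ} (a : Fin k → ℚ) :
    ∃ (d : ℤ) (b : Fin k → ℤ), d ≠ 0 ∧ ∀ m, (b m : ℚ) = a m * d := by
  classical
  refine ⟨∏ m, ((a m).den : ℤ), ?_⟩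
  have hd : ∀ m : Fin k, ((a m).den : ℤ) ∣ ∏ m, ((a m).den : ℤ) :=
    fun m => Finset.dvd_prod_of_mem _ (Finset.mem_univ m)
  have hb : ∀ m, ∃ bm : ℤ, (bm : ℚ) = a m * (∏ m, ((a m).den : ℤ)) := by
    intro m
    obtain ⟨c, hc⟩ := hd m
    refine ⟨(a m).num * c, ?_⟩
    rw [hc]
    push_cast
    rw [← mul_assoc]
    congr 1
    rw [mul_comm, Rat.den_mul_eq_num]
  choose b hb using hb
  refine ⟨b, ?_, hb⟩
  simp only [ne_eq, Finset.prod_eq_zero_iff, not_exists]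
  intro m
  simp [(a m).den_nz]

lemma exists_triangular {G : Type*} [AddCommGroup G] (hG : Torsionless G)
    (h : ℕ → G) (hind : LinearIndependent ℤ h) (n : ℕ) :
    ∃ f : G →+ ℤ, (∀ m < n, f (h m) = 0) ∧ f (h n) ≠ 0 := by
  classical
  set Φ : (G →+ ℤ) → (Fin (n+1) → ℚ) := fun f m => (f (h (m : ℕ)) : ℚ) with hΦ
  set W : Submodule ℚ (Fin (n+1) → ℚ) := Submodule.span ℚ (Set.range Φ) with hW
  have hWtop : W = ⊤ := by
    by_contra hne
    obtain ⟨φ, hφ0, hφbot⟩ := W.exists_dual_map_eq_bot_of_lt_top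
      (lt_top_iff_ne_top.mpr hne) inferInstance
    set a : Fin (n+1) → ℚ := fun m => φ fun j => if m = j then 1 else 0 with ha
    have hrep : ∀ v, φ v = ∑ m, v m * a m := by
      intro v
      rw [LinearMap.pi_apply_eq_sum_univ φ v]
      simp [ha, smul_eq_mul]
    obtain ⟨d, b, hd, hb⟩ := clear_denoms a
    have hfb : ∀ f : G →+ ℤ, f (∑ m : Fin (n+1), b m • h (m : ℕ)) = 0 := by
      intro f
      have h1 : φ (Φ f) = 0 := by
        have : Φ f ∈ W := Submodule.subset_span ⟨f, rfl⟩
        have := Submodule.mem_map_of_mem (f := φ) this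
        rw [hφbot] at this
        exact (Submodule.mem_bot ℚ).mp this
      rw [hrep] at h1
      have h2 : (∑ m, (Φ f) m * a m) * d = 0 := by rw [h1, zero_mul]
      rw [Finset.sum_mul] at h2
      have h3 : ∑ m : Fin (n+1), ((f (h (m : ℕ)) * b m : ℤ) : ℚ) = 0 := by
        rw [← h2]
        refine Finset.sum_congr rfl fun m _ => ?_
        push_cast
        rw [hb m, hΦ]
        ring
      rw [← Int.cast_sum] at h3
      have h4 : ∑ m : Fin (n+1), f (h (m : ℕ)) * b m = 0 := by exact_mod_cast h3
      rw [map_sum]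
      calc ∑ m : Fin (n+1), f (b m • h (m : ℕ))
          = ∑ m : Fin (n+1), f (h (m : ℕ)) * b m := by
            refine Finset.sum_congr rfl fun m _ => ?_
            rw [map_zsmul, smul_eq_mul, mul_comm]
        _ = 0 := h4
    have hx : (∑ m : Fin (n+1), b m • h (m : ℕ)) = 0 := by
      by_contra hne0
      obtain ⟨f, hf⟩ := hG _ hne0
      exact hf (hfb f)
    have hcomp : LinearIndependent ℤ fun m : Fin (n+1) => h (m : ℕ) :=
      hind.comp (fun m : Fin (n+1) => (m : ℕ)) Fin.val_injective
    have hb0 : ∀ m, b m = 0 := by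
      have := Fintype.linearIndependent_iff.mp hcomp b hx
      exact this
    have ha0 : ∀ m, a m = 0 := by
      intro m
      have := hb m
      rw [hb0 m] at this
      have : a m * d = 0 := by exact_mod_cast this.symm
      rcases mul_eq_zero.mp this with h | h
      · exact h
      · exact absurd (by exact_mod_cast h) hd
    apply hφ0
    ext v
    simp [hrep, ha0]
  -- now extract f
  have hmem : (Pi.single (Fin.last n) 1 : Fin (n+1) → ℚ) ∈ W := by
    rw [hWtop]; trivial
  rw [hW] at hmem
  obtain ⟨k, q, F, hsum⟩ := Submodule.mem_span_set'.mp hmem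
  choose fF hfF using fun i => (F i).2
  obtain ⟨d, b, hd, hb⟩ := clear_denoms q
  have key : ∀ m : Fin (n+1),
      (((∑ i : Fin k, b i • fF i) (h (m : ℕ)) : ℤ) : ℚ)
        = (Pi.single (Fin.last n) (1 : ℚ) : Fin (n+1) → ℚ) m * (d : ℚ) := by
    intro m
    have h1 : (((∑ i : Fin k, b i • fF i) (h (m : ℕ)) : ℤ) : ℚ)
        = ∑ i : Fin k, q i • ((F i : Fin (n+1) → ℚ) m) * (d : ℚ) := by
      rw [AddMonoidHom.finset_sum_apply]
      push_cast
      refine Finset.sum_congr rfl fun i _ => ?_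
      rw [Pi.smul_apply, smul_eq_mul]
      push_cast
      rw [hb i, ← hfF i]
      simp only [Φ, smul_eq_mul]
      ring
    rw [h1, ← Finset.sum_mul]
    congr 1
    rw [← hsum]
    simp [Finset.sum_apply]
  refine ⟨∑ i : Fin k, b i • fF i, ?_, ?_⟩
  · intro m hm
    have := key ⟨m, by omega⟩
    simp only [Pi.single_apply] at this
    rw [if_neg (by simp only [Fin.ext_iff, Fin.val_last]; omega), zero_mul] at this
    exact_mod_cast this
  · have := key (Fin.last n)
    rw [Pi.single_eq_same, one_mul] at this
    simp only [Fin.val_last] at this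
    intro hcon
    rw [hcon] at this
    exact hd (by exact_mod_cast this.symm)

noncomputable def cQ (ι : Type*) : (ι →₀ ℤ) →ₗ[ℤ] (ι →₀ ℚ) :=
  Finsupp.mapRange.linearMap (Int.castAddHom ℚ).toIntLinearMap

lemma cQ_injective (ι : Type*) : Function.Injective (cQ ι) := by
  exact Finsupp.mapRange_injective _ (by simp) (fun a b h => by simpa using h)

lemma rankA {ι : Type*} (T : AddSubgroup (ι →₀ ℤ)) (W : Submodule ℚ (ι →₀ ℚ))
    (hTW : ∀ x ∈ T, cQ ι x ∈ W) : Module.rank ℤ T ≤ Module.rank ℚ W := by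
  rw [Module.rank_def]
  apply ciSup_le'
  rintro ⟨s, li⟩
  let j0 : ↥T →ₗ[ℤ] (ι →₀ ℚ) := (cQ ι).comp T.subtype.toIntLinearMap
  let j : ↥T →ₗ[ℤ] ↥(W.restrictScalars ℤ) :=
    j0.codRestrict (W.restrictScalars ℤ) (fun x => hTW x x.2)
  have hjinj : Function.Injective j := by
    intro x y hxy
    have : j0 x = j0 y := congrArg Subtype.val hxy
    exact Subtype.val_injective (cQ_injective ι this)
  have li' : LinearIndependent ℤ fun x : s => j x :=
    li.map' j (LinearMap.ker_eq_bot.mpr hjinj)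
  have liQ : LinearIndependent ℚ fun x : s => j x :=
    (LinearIndependent.iff_fractionRing ℤ ℚ).mp li'
  have := liQ.cardinal_lift_le_rank
  simp only [Cardinal.lift_id] at this
  exact this

lemma rankB {ι : Type*} (T : AddSubgroup (ι →₀ ℤ)) :
    Module.rank ℚ (Submodule.span ℚ (cQ ι '' (T : Set (ι →₀ ℤ)))) ≤ Module.rank ℤ T := by
  obtain ⟨b, hbsub, hbspan, hbind⟩ := exists_linearIndependent ℚ (cQ ι '' (T : Set (ι →₀ ℤ)))
  rw [← hbspan, rank_span_set hbind]
  have hpre : ∀ x : b, ∃ t : ↥T, cQ ι t = (x : ι →₀ ℚ) := by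
    rintro ⟨x, hx⟩
    obtain ⟨t, ht, rfl⟩ := hbsub hx
    exact ⟨⟨t, ht⟩, rfl⟩
  choose p hp using hpre
  have hZ : LinearIndependent ℤ ((↑) : b → (ι →₀ ℚ)) :=
    hbind.restrict_scalars (by
      intro x y h
      simp only [zsmul_eq_mul, mul_one] at h
      exact_mod_cast h)
  have hpind : LinearIndependent ℤ p := by
    apply LinearIndependent.of_comp ((cQ ι).comp T.subtype.toIntLinearMap)
    convert hZ using 1
    funext x
    simpa using hp x
  simpa using hpind.cardinal_lift_le_rank

theorem stmt_8.{u} {G : Type*} [AddCommGroup G] (hG : Torsionless G)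
    (H : AddSubgroup G) (hrk : ℵ₀ ≤ Module.rank ℤ H) (hbind : Binds.{u} H) :
    ∃ g : G →+ (ℕ → ℤ),
      Binds.{u} (SpeckerS.addSubgroupOf (g.range ⊔ SpeckerS)) := by
  classical
  -- Step A : an independent sequence in H
  obtain ⟨s, hscard, hsind⟩ := exists_set_linearIndependent_of_isDomain ℤ ↥H
  have hinf : Infinite s := Cardinal.infinite_iff.mpr (hscard ▸ hrk)
  let e : ℕ ↪ s := Infinite.natEmbedding s
  let h : ℕ → G := fun n => ((e n : ↥H) : G)
  have hmem : ∀ n, h n ∈ H := fun n => (e n : ↥H).2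
  have hind : LinearIndependent ℤ h := by
    have h1 : LinearIndependent ℤ fun n : ℕ => ((e n : ↥H)) := hsind.comp e e.injective
    exact h1.map' H.subtype.toIntLinearMap
      (LinearMap.ker_eq_bot.mpr Subtype.val_injective)
  -- Step C : triangular functionals
  choose f hf0 hfne using fun n => exists_triangular hG h hind n
  let g : G →+ (ℕ → ℤ) := AddMonoidHom.mk' (fun x k => f k x)
    (by intro a b; funext k; simp [map_add])
  refine ⟨g, ?_⟩
  set K := g.range ⊔ SpeckerS with hKdef
  intro ι φ
  have hgK : ∀ x : G, g x ∈ K := fun x => le_sup_left (α := AddSubgroup (ℕ → ℤ)) ⟨x, rfl⟩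
  let incl : G →+ ↥K := AddMonoidHom.mk' (fun x => ⟨g x, hgK x⟩)
    (by intro a b; ext1; simp)
  set ψ : G →+ (ι →₀ ℤ) := φ.comp incl with hψdef
  have hsm : ∀ n : ℕ, (Pi.single n 1 : ℕ → ℤ) ∈ K := by
    intro n
    refine le_sup_right (α := AddSubgroup (ℕ → ℤ)) ?_
    show (Function.support (Pi.single n 1 : ℕ → ℤ)).Finite
    exact (Set.finite_singleton n).subset
      (Function.support_subset_iff'.mpr fun x hx => Pi.single_eq_of_ne hx 1)
  let E : ℕ → ↥K := fun n => ⟨Pi.single n 1, hsm n⟩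
  -- the triangular relation
  have hgh : ∀ n : ℕ, incl (h n) = ∑ m ∈ Finset.range (n+1), f m (h n) • E m := by
    intro n
    apply Subtype.val_injective
    have hval : ((∑ m ∈ Finset.range (n+1), f m (h n) • E m : ↥K) : ℕ → ℤ)
        = ∑ m ∈ Finset.range (n+1), f m (h n) • (Pi.single m 1 : ℕ → ℤ) := by
      push_cast
      rfl
    rw [hval]
    show g (h n) = _
    funext k
    rw [Finset.sum_apply]
    simp only [Pi.smul_apply, Pi.single_apply, smul_eq_mul, mul_ite, mul_one, mul_zero]
    rw [Finset.sum_ite_eq (Finset.range (n+1)) k fun m => f m (h n)]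
    by_cases hk : k ∈ Finset.range (n+1)
    · rw [if_pos hk]; rfl
    · rw [if_neg hk]
      exact hf0 k n (by simpa using hk)
  set B := Submodule.span ℚ (cQ ι '' ((H.map ψ) : Set (ι →₀ ℤ))) with hBdef
  have hE : ∀ n, cQ ι (φ (E n)) ∈ B := by
    intro n
    induction n using Nat.strong_induction_on with
    | _ n IH =>
    have h1 : ψ (h n) = ∑ m ∈ Finset.range (n+1), f m (h n) • φ (E m) := by
      have h0 := congrArg φ (hgh n)
      rw [map_sum φ] at h0
      simpa [hψdef, map_zsmul] using h0
    have h2 : cQ ι (ψ (h n)) = ∑ m ∈ Finset.range (n+1), f m (h n) • cQ ι (φ (E m)) := by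
      rw [h1, map_sum]
      simp [map_zsmul]
    have h3 : cQ ι (ψ (h n)) ∈ B := Submodule.subset_span ⟨ψ (h n), ⟨h n, hmem n, rfl⟩, rfl⟩
    rw [Finset.sum_range_succ] at h2
    have h5 : (f n (h n)) • cQ ι (φ (E n)) ∈ B := by
      have h4 : (f n (h n)) • cQ ι (φ (E n))
          = cQ ι (ψ (h n)) - ∑ m ∈ Finset.range n, f m (h n) • cQ ι (φ (E m)) := by
        rw [h2]; abel
      rw [h4]
      exact Submodule.sub_mem _ h3 (Submodule.sum_mem _ fun m hm =>
        zsmul_mem (IH m (Finset.mem_range.mp hm)) _)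
    have h6 : ((f n (h n) : ℤ) : ℚ) • cQ ι (φ (E n)) ∈ B := by
      rwa [Int.cast_smul_eq_zsmul]
    exact (Submodule.smul_mem_iff _ (by exact_mod_cast hfne n)).mp h6
  have key : ∀ x ∈ (SpeckerS.addSubgroupOf K).map φ, cQ ι x ∈ B := by
    rintro x ⟨t, ht, rfl⟩
    have hts : (Function.support ((t : ↥K) : ℕ → ℤ)).Finite :=
      (AddSubgroup.mem_addSubgroupOf).mp ht
    have hdec : t = ∑ n ∈ hts.toFinset, ((t : ℕ → ℤ) n) • E n := by
      apply Subtype.val_injective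
      have hval : ((∑ n ∈ hts.toFinset, ((t : ℕ → ℤ) n) • E n : ↥K) : ℕ → ℤ)
          = ∑ n ∈ hts.toFinset, ((t : ℕ → ℤ) n) • (Pi.single n 1 : ℕ → ℤ) := by
        push_cast
        rfl
      rw [hval]
      funext k
      rw [Finset.sum_apply]
      simp only [Pi.smul_apply, Pi.single_apply, smul_eq_mul, mul_ite, mul_one, mul_zero]
      rw [Finset.sum_ite_eq hts.toFinset k fun n => (t : ℕ → ℤ) n]
      by_cases hk : k ∈ hts.toFinset
      · rw [if_pos hk]
      · rw [if_neg hk]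
        have : k ∉ Function.support ((t : ↥K) : ℕ → ℤ) := by simpa using hk
        simp only [Function.mem_support, not_not] at this
        exact this
    rw [hdec, map_sum φ, map_sum (cQ ι)]
    simp only [map_zsmul]
    exact Submodule.sum_mem _ fun n _ => zsmul_mem (hE n) _
  calc Module.rank ℤ ((SpeckerS.addSubgroupOf K).map φ)
      ≤ Module.rank ℚ B := rankA _ _ key
    _ ≤ Module.rank ℤ (H.map ψ) := rankB _
    _ < ℵ₀ := hbind ι ψ
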